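/- Let f, g ∈ End^0(G). If the pair (f,g) is fixed point free, then the connected component of the multigraph Γ_{f,g} containing the vertex 0 is a tree, and in each of the other connected components of Γ_{f,g} the number of edges (each of the n edges, including loops, counted once) equals the number of vertices. -/

import Mathlib

/-!
STATEMENT 4: Let `f, g ∈ End⁰(G)`.  If `(f, g)` is fixed point free, then the
connected component of the multigraph `Γ_{f,g}` containing the vertex `0` is a
tree, and in each of the other connected components of `Γ_{f,g}` the number of
edges equals the number of vertices.

Setting: `n ≥ 1`, `T` a nontrivial finite group, `G = Tⁿ = (Fin n → T)`.
The vertex set `{0, 1, …, n}` is modelled by `Option (Fin n)`, with `none`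
the distinguished vertex `0`.  See the definitions below: `Γ_{f,g}` is the
multigraph whose `i`-th edge joins `θ_f(i)` and `θ_g(i)`.  A connected
component is a tree iff (it is connected and) no cycle lies inside it; the
edges of the component of a vertex `a` are those edges both of whose ends are
reachable from `a`, and its vertices are those reachable from `a`.
-/

/-- Adjacency in the multigraph whose `i`-th edge has ends `ends i`. -/
def MGraph.Adj {V : Type*} {n : ℕ} (ends : Fin n → Sym2 V) (a b : V) : Prop :=
  ∃ i, ends i = s(a, b)

/-- Two vertices are joined by a walk. -/
def MGraph.Reach {V : Type*} {n : ℕ} (ends : Fin n → Sym2 V) : V → V → Prop :=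
  Relation.ReflTransGen (MGraph.Adj ends)

/-- The multigraph has a cycle all of whose vertices satisfy the predicate
`P`: for some `m`, there are `m + 1` pairwise distinct edges and `m + 1`
pairwise distinct vertices `v 0, …, v m` with the `k`-th edge joining `v k`
and `v (k+1)` (cyclically), each `v k` satisfying `P`.  (`m = 0` detects a
loop, `m = 1` a pair of parallel edges.) -/
def MGraph.HasCycleWithin {V : Type*} {n : ℕ} (ends : Fin n → Sym2 V)
    (P : V → Prop) : Prop :=
  ∃ (m : ℕ) (e : Fin (m + 1) → Fin n) (v : Fin (m + 1) → V),
    Function.Injective e ∧ Function.Injective v ∧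
      (∀ k : Fin (m + 1), ends (e k) = s(v k, v (k + 1))) ∧
      ∀ k : Fin (m + 1), P (v k)

/-- The connected component of the vertex `a` is a tree: it is connected (any
two of its vertices are joined by a walk) and contains no cycle. -/
def MGraph.ComponentIsTree {V : Type*} {n : ℕ} (ends : Fin n → Sym2 V)
    (a : V) : Prop :=
  (∀ b c : V, MGraph.Reach ends a b → MGraph.Reach ends a c →
    MGraph.Reach ends b c) ∧
  ¬ MGraph.HasCycleWithin ends (MGraph.Reach ends a)

/-- `(θ, φ)` witnesses that `f` lies in `End⁰(G)`. -/
def End0Data {n : ℕ} {T : Type*} [Group T] (θ : Fin n → Option (Fin n))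
    (φ : Fin n → (T →* T)) (f : (Fin n → T) →* (Fin n → T)) : Prop :=
  (∀ i, (θ i).isSome → Function.Bijective (φ i)) ∧
    ∀ (x : Fin n → T) (i : Fin n), f x i = (θ i).elim 1 fun j => φ i (x j)

/-! ### Auxiliary material -/

/-- `StepN ends k a b`: there is a walk of length `k` from `a` to `b`. -/
def MGraph.StepN {V : Type*} {n : ℕ} (ends : Fin n → Sym2 V) : ℕ → V → V → Prop
  | 0 => fun a b => a = b
  | k + 1 => fun a b => ∃ c, MGraph.StepN ends k a c ∧ MGraph.Adj ends c b

lemma MGraph.stepN_reach {V : Type*} {n : ℕ} {ends : Fin n → Sym2 V} :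
    ∀ {k : ℕ} {a b : V}, MGraph.StepN ends k a b → MGraph.Reach ends a b := by
  intro k
  induction k with
  | zero => intro a b h; exact h ▸ Relation.ReflTransGen.refl
  | succ k ih =>
    rintro a b ⟨c, hc, hadj⟩
    exact Relation.ReflTransGen.tail (ih hc) hadj

lemma MGraph.reach_stepN {V : Type*} {n : ℕ} {ends : Fin n → Sym2 V} {a b : V}
    (h : MGraph.Reach ends a b) : ∃ k, MGraph.StepN ends k a b := by
  induction h with
  | refl => exact ⟨0, rfl⟩
  | tail _ hadj ih =>
    obtain ⟨k, hk⟩ := ih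
    exact ⟨k + 1, _, hk, hadj⟩

/-- BFS structure on the component of `a`: a distance function `d`, a parent
function `p` and a parent-edge function `ι`. -/
lemma MGraph.exists_bfs {V : Type*} {n : ℕ} [Nonempty V] [Nonempty (Fin n)]
    (ends : Fin n → Sym2 V) (a : V) :
    ∃ (d : V → ℕ) (p : V → V) (ι : V → Fin n),
      d a = 0 ∧
      ∀ b, MGraph.Reach ends a b → b ≠ a →
        ends (ι b) = s(b, p b) ∧ MGraph.Reach ends a (p b) ∧ d (p b) < d b := by
  classical
  set d : V → ℕ :=
    fun b => if h : ∃ k, MGraph.StepN ends k a b then Nat.find h else 0 with hd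
  have hda : d a = 0 := by
    have hex : ∃ k, MGraph.StepN ends k a a := ⟨0, rfl⟩
    have h1 : d a = Nat.find hex := by rw [hd]; simp only; rw [dif_pos hex]
    have h2 : Nat.find hex ≤ 0 := Nat.find_le rfl
    omega
  have key : ∀ b, MGraph.Reach ends a b → b ≠ a →
      ∃ (c : V) (i : Fin n),
        ends i = s(b, c) ∧ MGraph.Reach ends a c ∧ d c < d b := by
    intro b hb hba
    have hex : ∃ k, MGraph.StepN ends k a b := MGraph.reach_stepN hb
    have hdb : d b = Nat.find hex := by rw [hd]; simp only; rw [dif_pos hex]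
    have hspec : MGraph.StepN ends (Nat.find hex) a b := Nat.find_spec hex
    have hne : Nat.find hex ≠ 0 := by
      intro h0
      rw [h0] at hspec
      exact hba hspec.symm
    obtain ⟨m, hm⟩ := Nat.exists_eq_succ_of_ne_zero hne
    rw [hm] at hspec
    obtain ⟨c, hc, i, hi⟩ := hspec
    have hcx : ∃ k, MGraph.StepN ends k a c := ⟨m, hc⟩
    have hdc : d c ≤ m := by
      have : d c = Nat.find hcx := by rw [hd]; simp only; rw [dif_pos hcx]
      rw [this]; exact Nat.find_le hc
    refine ⟨c, i, ?_, MGraph.stepN_reach hc, by omega⟩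
    rw [hi]; exact Sym2.eq_swap
  choose! p ι h1 h2 h3 using key
  exact ⟨d, p, ι, hda, fun b hb hba => ⟨h1 b hb hba, h2 b hb hba, h3 b hb hba⟩⟩

/-- Iterated "solution transport" with fuel. -/
noncomputable def MGraph.iterS {V T : Type*} [DecidableEq V] (a : V) (p : V → V)
    (β : V → T → T) (t : T) : ℕ → V → T
  | 0, _ => t
  | k + 1, b => if b = a then t else β b (MGraph.iterS a p β t k (p b))

theorem component_structure_of_fixed_point_free
    (n : ℕ) (hn : 1 ≤ n) (T : Type*) [Group T] [Finite T] [Nontrivial T]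
    (f g : (Fin n → T) →* (Fin n → T))
    (θf θg : Fin n → Option (Fin n)) (φf φg : Fin n → (T →* T))
    (hf : End0Data θf φf f) (hg : End0Data θg φg g)
    (hfpf : ∀ σ : Fin n → T, f σ = g σ ↔ σ = 1) :
    MGraph.ComponentIsTree (fun i => s(θf i, θg i)) (none : Option (Fin n)) ∧
      ∀ a : Option (Fin n),
        ¬ MGraph.Reach (fun i => s(θf i, θg i)) none a →
        Nat.card {i : Fin n //
            ∀ x ∈ s(θf i, θg i), MGraph.Reach (fun j => s(θf j, θg j)) a x} =
          Nat.card {b : Option (Fin n) //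
            MGraph.Reach (fun j => s(θf j, θg j)) a b} := by
  classical
  haveI : Nonempty (Fin n) := ⟨⟨0, hn⟩⟩
  set ends : Fin n → Sym2 (Option (Fin n)) := fun i => s(θf i, θg i) with hends
  set R : Option (Fin n) → Option (Fin n) → Prop := MGraph.Reach ends with hR
  have Rrefl : ∀ a, R a a := fun a => Relation.ReflTransGen.refl
  have Rsymm : ∀ {a b}, R a b → R b a := by
    intro a b h
    haveI : Std.Symm (MGraph.Adj ends) := ⟨fun x y ⟨i, hi⟩ => ⟨i, hi.trans Sym2.eq_swap⟩⟩
    exact Relation.ReflTransGen.stdSymm.symm _ _ h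
  have Rtrans : ∀ {a b c}, R a b → R b c → R a c :=
    fun h1 h2 => Relation.ReflTransGen.trans h1 h2
  have Radj : ∀ i, R (θf i) (θg i) :=
    fun i => Relation.ReflTransGen.single ⟨i, rfl⟩
  -- the component quotient
  let sd : Setoid (Option (Fin n)) := ⟨R, ⟨fun a => Rrefl a, Rsymm, Rtrans⟩⟩
  letI : DecidableEq (Quotient sd) := Classical.decEq _
  letI : Fintype (Quotient sd) := @Quotient.fintype _ _ sd
    (fun _ _ => Classical.propDecidable _)
  let mk : Option (Fin n) → Quotient sd := Quotient.mk sd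
  have mk_eq : ∀ {u v}, R u v → mk u = mk v := fun h => Quotient.sound h
  have mk_exact : ∀ {u v}, mk u = mk v → R u v := fun h => Quotient.exact h
  let Vc : Quotient sd → Finset (Option (Fin n)) :=
    fun q => Finset.univ.filter (fun v => mk v = q)
  let Ec : Quotient sd → Finset (Fin n) :=
    fun q => Finset.univ.filter (fun i => mk (θf i) = q)
  have memVc : ∀ a b, b ∈ Vc (mk a) ↔ R a b := by
    intro a b
    simp only [Vc, Finset.mem_filter, Finset.mem_univ, true_and]
    exact ⟨fun h => Rsymm (mk_exact h), fun h => mk_eq (Rsymm h)⟩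
  have memEc : ∀ a i, i ∈ Ec (mk a) ↔ R a (θf i) := by
    intro a i
    simp only [Ec, Finset.mem_filter, Finset.mem_univ, true_and]
    exact ⟨fun h => Rsymm (mk_exact h), fun h => mk_eq (Rsymm h)⟩
  have hVmemself : ∀ a, a ∈ Vc (mk a) := fun a => (memVc a a).2 (Rrefl a)
  -- generic facts about a BFS structure
  have genInj : ∀ (a : Option (Fin n)) (d : Option (Fin n) → ℕ)
      (p : Option (Fin n) → Option (Fin n)) (ι : Option (Fin n) → Fin n),
      (∀ b, R a b → b ≠ a →
        ends (ι b) = s(b, p b) ∧ R a (p b) ∧ d (p b) < d b) →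
      (∀ b ∈ (Vc (mk a)).erase a, ι b ∈ Ec (mk a)) ∧
      (∀ b₁ ∈ (Vc (mk a)).erase a, ∀ b₂ ∈ (Vc (mk a)).erase a,
        ι b₁ = ι b₂ → b₁ = b₂) := by
    intro a d p ι hbfs
    constructor
    · intro b hb
      have hbne : b ≠ a := Finset.ne_of_mem_erase hb
      have hbR : R a b := (memVc a b).1 (Finset.mem_of_mem_erase hb)
      obtain ⟨hend, hpR, _⟩ := hbfs b hbR hbne
      have h' : s(θf (ι b), θg (ι b)) = s(b, p b) := hend
      rcases Sym2.eq_iff.mp h' with ⟨h1, _⟩ | ⟨h1, _⟩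
      · exact (memEc a (ι b)).2 (by rw [h1]; exact hbR)
      · exact (memEc a (ι b)).2 (by rw [h1]; exact hpR)
    · intro b₁ hb₁ b₂ hb₂ heq
      by_contra hne
      have hbne₁ : b₁ ≠ a := Finset.ne_of_mem_erase hb₁
      have hbR₁ : R a b₁ := (memVc a b₁).1 (Finset.mem_of_mem_erase hb₁)
      have hbne₂ : b₂ ≠ a := Finset.ne_of_mem_erase hb₂
      have hbR₂ : R a b₂ := (memVc a b₂).1 (Finset.mem_of_mem_erase hb₂)
      obtain ⟨hend₁, _, hd₁⟩ := hbfs b₁ hbR₁ hbne₁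
      obtain ⟨hend₂, _, hd₂⟩ := hbfs b₂ hbR₂ hbne₂
      rw [heq] at hend₁
      have h' : s(b₁, p b₁) = s(b₂, p b₂) := hend₁.symm.trans hend₂
      rcases Sym2.eq_iff.mp h' with ⟨h1, _⟩ | ⟨h1, h2⟩
      · exact hne h1
      · rw [h2] at hd₁
        rw [← h1] at hd₂
        omega
  -- Claim A: every component has at most one more vertex than edges
  have claimA : ∀ a : Option (Fin n),
      (Vc (mk a)).card ≤ (Ec (mk a)).card + 1 := by
    intro a
    obtain ⟨d, p, ι, hd0, hbfs⟩ := MGraph.exists_bfs ends a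
    obtain ⟨hmaps, hinj⟩ := genInj a d p ι hbfs
    have hcard := Finset.card_le_card_of_injOn ι hmaps
      (fun b₁ h₁ b₂ h₂ heq =>
        hinj b₁ (Finset.mem_coe.mp h₁) b₂ (Finset.mem_coe.mp h₂) heq)
    have herase : ((Vc (mk a)).erase a).card = (Vc (mk a)).card - 1 :=
      Finset.card_erase_of_mem (hVmemself a)
    have hpos : 0 < (Vc (mk a)).card := Finset.card_pos.mpr ⟨a, hVmemself a⟩
    omega
  -- Claim B: components away from `none` have at least as many edges as vertices
  have claimB : ∀ a : Option (Fin n), mk a ≠ mk none →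
      (Vc (mk a)).card ≤ (Ec (mk a)).card := by
    intro a hq
    by_contra hlt'
    have hlt : (Ec (mk a)).card < (Vc (mk a)).card := by omega
    obtain ⟨d, p, ι, hd0, hbfs⟩ := MGraph.exists_bfs ends a
    obtain ⟨hmaps, hinj⟩ := genInj a d p ι hbfs
    have herase : ((Vc (mk a)).erase a).card = (Vc (mk a)).card - 1 :=
      Finset.card_erase_of_mem (hVmemself a)
    have hsurj := Finset.surj_on_of_inj_on_of_card_le
      (s := (Vc (mk a)).erase a) (t := Ec (mk a)) (fun b _ => ι b)
      (fun b hb => hmaps b hb)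
      (fun b₁ b₂ h₁ h₂ heq => hinj b₁ h₁ b₂ h₂ heq)
      (by omega)
    have hanone : ¬ R a none := fun h => hq (mk_eq h)
    have hcompnone : ∀ b, R a b → b ≠ none := fun b hb h => hanone (h ▸ hb)
    obtain ⟨ja, hja⟩ : ∃ ja, a = some ja :=
      Option.ne_none_iff_exists'.mp (hcompnone a (Rrefl a))
    obtain ⟨t, ht⟩ := exists_ne (1 : T)
    set β : Option (Fin n) → T → T := fun b u =>
      if θf (ι b) = b then Function.invFun (φf (ι b)) (φg (ι b) u)
      else Function.invFun (φg (ι b)) (φf (ι b) u) with hβ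
    set x : Option (Fin n) → T := fun b => MGraph.iterS a p β t (d b) b with hx
    have xa : x a = t := by
      rw [hx]; simp only [hd0]; rfl
    have stab : ∀ k b, R a b → d b ≤ k → MGraph.iterS a p β t k b = x b := by
      intro k
      induction k using Nat.strong_induction_on with
      | _ k IH =>
        intro b hb hdb
        match k, hdb with
        | 0, hdb =>
          have h0 : d b = 0 := by omega
          rw [hx]; simp only [h0]
        | k + 1, hdb =>
          by_cases hba : b = a
          · subst hba
            rw [xa]
            simp [MGraph.iterS]
          · obtain ⟨_, hpR, hdlt⟩ := hbfs b hb hba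
            obtain ⟨m, hm⟩ : ∃ m, d b = m + 1 := ⟨d b - 1, by omega⟩
            have hs1 : MGraph.iterS a p β t (k + 1) b
                = β b (MGraph.iterS a p β t k (p b)) := by
              simp [MGraph.iterS, hba]
            have hs2 : x b = β b (MGraph.iterS a p β t m (p b)) := by
              rw [hx]; simp only [hm]
              simp [MGraph.iterS, hba]
            rw [hs1, hs2,
              IH k (by omega) (p b) hpR (by omega),
              IH m (by omega) (p b) hpR (by omega)]
    have xkey : ∀ b, R a b → b ≠ a → x b = β b (x (p b)) := by
      intro b hb hba
      obtain ⟨_, hpR, hdlt⟩ := hbfs b hb hba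
      obtain ⟨m, hm⟩ : ∃ m, d b = m + 1 := ⟨d b - 1, by omega⟩
      have hs2 : x b = β b (MGraph.iterS a p β t m (p b)) := by
        rw [hx]; simp only [hm]
        simp [MGraph.iterS, hba]
      rw [hs2, stab m (p b) hpR (by omega)]
    set σ : Fin n → T := fun j => if R a (some j) then x (some j) else 1 with hσ
    have hσin : ∀ (j : Fin n), R a (some j) → σ j = x (some j) := by
      intro j hj
      rw [hσ]; simp only [if_pos hj]
    have hσout : ∀ (j : Fin n), ¬ R a (some j) → σ j = 1 := by
      intro j hj
      rw [hσ]; simp only [if_neg hj]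
    have hfg : f σ = g σ := by
      funext i
      rw [hf.2 σ i, hg.2 σ i]
      by_cases hqi : R a (θf i)
      · have hiEc : i ∈ Ec (mk a) := (memEc a i).2 hqi
        obtain ⟨b, hb, hib₀⟩ := hsurj i hiEc
        have hib : i = ι b := hib₀
        have hbne : b ≠ a := Finset.ne_of_mem_erase hb
        have hbR : R a b := (memVc a b).1 (Finset.mem_of_mem_erase hb)
        obtain ⟨hend, hpR, hdlt⟩ := hbfs b hbR hbne
        have hsym : s(θf i, θg i) = s(b, p b) := by
          rw [hib]; exact hend
        have hpbne : p b ≠ b := fun h => by rw [h] at hdlt; omega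
        obtain ⟨jb, hjb⟩ : ∃ jb, b = some jb :=
          Option.ne_none_iff_exists'.mp (hcompnone b hbR)
        obtain ⟨jp, hjp⟩ : ∃ jp, p b = some jp :=
          Option.ne_none_iff_exists'.mp (hcompnone _ hpR)
        rcases Sym2.eq_iff.mp hsym with ⟨h1, h2⟩ | ⟨h1, h2⟩
        · -- θf i = b, θg i = p b
          rw [h1, h2, hjp, hjb]
          show φf i (σ jb) = φg i (σ jp)
          have hbij : Function.Bijective (φf i) := hf.1 i (by rw [h1, hjb]; rfl)
          have hcond : θf (ι b) = b := by rw [← hib]; exact h1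
          have hxb : x b = Function.invFun (φf i) (φg i (x (p b))) := by
            rw [xkey b hbR hbne, hβ]
            simp only
            rw [if_pos hcond, ← hib]
          rw [hσin jb (hjb ▸ hbR), hσin jp (hjp ▸ hpR), ← hjb, ← hjp, hxb]
          exact Function.rightInverse_invFun hbij.surjective _
        · -- θf i = p b, θg i = b
          rw [h1, h2, hjp, hjb]
          show φf i (σ jp) = φg i (σ jb)
          have hbij : Function.Bijective (φg i) := hg.1 i (by rw [h2, hjb]; rfl)
          have hcond : ¬ θf (ι b) = b := by rw [← hib, h1]; exact hpbne
          have hxb : x b = Function.invFun (φg i) (φf i (x (p b))) := by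
            rw [xkey b hbR hbne, hβ]
            simp only
            rw [if_neg hcond, ← hib]
          rw [hσin jb (hjb ▸ hbR), hσin jp (hjp ▸ hpR), ← hjb, ← hjp, hxb]
          exact (Function.rightInverse_invFun hbij.surjective _).symm
      · have hqg : ¬ R a (θg i) := fun h => hqi (Rtrans h (Rsymm (Radj i)))
        have hl : (θf i).elim 1 (fun j => φf i (σ j)) = 1 := by
          cases hθ : θf i with
          | none => rfl
          | some j =>
            show φf i (σ j) = 1
            rw [hσout j (hθ ▸ hqi), map_one]
        have hr : (θg i).elim 1 (fun j => φg i (σ j)) = 1 := by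
          cases hθ : θg i with
          | none => rfl
          | some j =>
            show φg i (σ j) = 1
            rw [hσout j (hθ ▸ hqg), map_one]
        rw [hl, hr]
    have hσ1 : σ = 1 := (hfpf σ).mp hfg
    have : σ ja = t := by
      rw [hσin ja (hja ▸ Rrefl a), ← hja, xa]
    rw [hσ1] at this
    exact ht this.symm
  -- transfer the claims to arbitrary components
  have claimA' : ∀ q : Quotient sd, (Vc q).card ≤ (Ec q).card + 1 := by
    intro q
    have h := claimA q.out
    have hout : mk q.out = q := Quotient.out_eq q
    rwa [hout] at h
  have claimB' : ∀ q : Quotient sd, q ≠ Quotient.mk sd none →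
      (Vc q).card ≤ (Ec q).card := by
    intro q hq
    have hout : mk q.out = q := Quotient.out_eq q
    have h := claimB q.out (by rw [hout]; exact hq)
    rwa [hout] at h
  -- the sums
  have hVsum : ∑ q : Quotient sd, (Vc q).card = n + 1 := by
    have h := Finset.card_eq_sum_card_fiberwise
      (s := (Finset.univ : Finset (Option (Fin n))))
      (t := (Finset.univ : Finset (Quotient sd))) (f := mk)
      (fun x _ => Finset.mem_univ _)
    rw [Finset.card_univ, Fintype.card_option, Fintype.card_fin] at h
    exact h.symm
  have hEsum : ∑ q : Quotient sd, (Ec q).card = n := by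
    have h := Finset.card_eq_sum_card_fiberwise
      (s := (Finset.univ : Finset (Fin n)))
      (t := (Finset.univ : Finset (Quotient sd))) (f := fun i => mk (θf i))
      (fun x _ => Finset.mem_univ _)
    rw [Finset.card_univ, Fintype.card_fin] at h
    exact h.symm
  set q0 : Quotient sd := Quotient.mk sd none with hq0
  have hVsplit : ∑ q ∈ Finset.univ.erase q0, (Vc q).card + (Vc q0).card
      = n + 1 := by
    rw [Finset.sum_erase_add _ _ (Finset.mem_univ q0)]; exact hVsum
  have hEsplit : ∑ q ∈ Finset.univ.erase q0, (Ec q).card + (Ec q0).card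
      = n := by
    rw [Finset.sum_erase_add _ _ (Finset.mem_univ q0)]; exact hEsum
  have hAle : ∑ q ∈ Finset.univ.erase q0, (Vc q).card
      ≤ ∑ q ∈ Finset.univ.erase q0, (Ec q).card :=
    Finset.sum_le_sum (fun q hq => claimB' q (Finset.ne_of_mem_erase hq))
  have hq0le : (Vc q0).card ≤ (Ec q0).card + 1 := claimA' q0
  have hq0pos : 0 < (Vc q0).card :=
    Finset.card_pos.mpr ⟨none, hVmemself none⟩
  have hEq0 : (Ec q0).card + 1 = (Vc q0).card := by omega
  have hAeq : ∑ q ∈ Finset.univ.erase q0, (Vc q).card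
      = ∑ q ∈ Finset.univ.erase q0, (Ec q).card := by omega
  have hEachA : ∀ q ∈ Finset.univ.erase q0, (Vc q).card = (Ec q).card :=
    (Finset.sum_eq_sum_iff_of_le
      (fun q hq => claimB' q (Finset.ne_of_mem_erase hq))).1 hAeq
  constructor
  · constructor
    · intro b c hb hc
      exact Rtrans (Rsymm hb) hc
    · rintro ⟨m, e, v, he, hv, hev, hvP⟩
      obtain ⟨d, p, ι, hd0, hbfs⟩ := MGraph.exists_bfs ends none
      obtain ⟨hmaps, hinj⟩ := genInj none d p ι hbfs
      have herase : ((Vc q0).erase none).card = (Vc q0).card - 1 :=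
        Finset.card_erase_of_mem (hVmemself none)
      have hsurj := Finset.surj_on_of_inj_on_of_card_le
        (s := (Vc q0).erase none) (t := Ec q0) (fun b _ => ι b)
        (fun b hb => hmaps b hb)
        (fun b₁ b₂ h₁ h₂ heq => hinj b₁ h₁ b₂ h₂ heq)
        (by omega)
      have bEdge : ∀ k : Fin (m + 1), ∃ b, R none b ∧ b ≠ none ∧
          ι b = e k ∧ s(b, p b) = s(v k, v (k + 1)) := by
        intro k
        have hek : e k ∈ Ec q0 := by
          have hsym : s(θf (e k), θg (e k)) = s(v k, v (k + 1)) := hev k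
          rcases Sym2.eq_iff.mp hsym with ⟨h1, _⟩ | ⟨h1, _⟩
          · exact (memEc none (e k)).2 (by rw [h1]; exact hvP k)
          · exact (memEc none (e k)).2 (by rw [h1]; exact hvP (k + 1))
        obtain ⟨b, hb, hbe₀⟩ := hsurj (e k) hek
        have hbe : ι b = e k := hbe₀.symm
        have hbne : b ≠ none := Finset.ne_of_mem_erase hb
        have hbR : R none b := (memVc none b).1 (Finset.mem_of_mem_erase hb)
        have h1 : s(θf (ι b), θg (ι b)) = s(b, p b) := (hbfs b hbR hbne).1
        refine ⟨b, hbR, hbne, hbe, ?_⟩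
        rw [← h1, hbe]
        exact hev k
      obtain ⟨K, _, hK⟩ := Finset.exists_max_image Finset.univ
        (fun k => d (v k)) ⟨0, Finset.mem_univ 0⟩
      -- the edge `e K` is the parent edge of `v K`
      obtain ⟨b, hbR, hbne, hbe, hsym⟩ := bEdge K
      have hdb : d (p b) < d b := (hbfs b hbR hbne).2.2
      have hιvK : ι (v K) = e K ∧ d (v (K + 1)) < d (v K) := by
        rcases Sym2.eq_iff.mp hsym with ⟨h1, h2⟩ | ⟨h1, h2⟩
        · rw [h2, h1] at hdb
          exact ⟨h1 ▸ hbe, hdb⟩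
        · rw [h2, h1] at hdb
          exact absurd hdb (by have := hK (K + 1) (Finset.mem_univ _); omega)
      -- the edge `e (K - 1)` is also the parent edge of `v K`
      have hK1 : K - 1 + 1 = K := sub_add_cancel K 1
      obtain ⟨b', hbR', hbne', hbe', hsym'⟩ := bEdge (K - 1)
      rw [hK1] at hsym'
      have hdb' : d (p b') < d b' := (hbfs b' hbR' hbne').2.2
      have hιvK' : ι (v K) = e (K - 1) := by
        rcases Sym2.eq_iff.mp hsym' with ⟨h1, h2⟩ | ⟨h1, h2⟩
        · rw [h2, h1] at hdb'
          exact absurd hdb' (by have := hK (K - 1) (Finset.mem_univ _); omega)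
        · exact h1 ▸ hbe'
      have heK : e K = e (K - 1) := hιvK.1.symm.trans hιvK'
      have hKeq : K = K - 1 := he heK
      have hKsucc : v (K + 1) = v K := by
        have : K + 1 = K := by
          conv_lhs => rw [hKeq]
          exact hK1
        rw [this]
      rw [hKsucc] at hιvK
      exact absurd hιvK.2 (lt_irrefl _)
  · intro a ha
    have hqa : mk a ≠ q0 := by
      intro h
      exact ha (Rsymm (mk_exact h))
    have hcard : (Vc (mk a)).card = (Ec (mk a)).card :=
      hEachA (mk a) (Finset.mem_erase.mpr ⟨hqa, Finset.mem_univ _⟩)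
    have hPeq : (fun i : Fin n =>
        ∀ x ∈ s(θf i, θg i), R a x) = (fun i : Fin n => mk (θf i) = mk a) := by
      funext i
      apply propext
      constructor
      · intro h
        exact mk_eq (Rsymm (h (θf i) (Sym2.mem_mk_left _ _)))
      · intro h
        have h1 : R a (θf i) := Rsymm (mk_exact h)
        intro x hx
        rcases Sym2.mem_iff.mp hx with rfl | rfl
        · exact h1
        · exact Rtrans h1 (Radj i)
    have hQeq : (fun b : Option (Fin n) => R a b)
        = (fun b : Option (Fin n) => mk b = mk a) := by
      funext b
      apply propext
      exact ⟨fun h => mk_eq (Rsymm h), fun h => Rsymm (mk_exact h)⟩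
    calc Nat.card {i : Fin n // ∀ x ∈ s(θf i, θg i), R a x}
        = Nat.card {i : Fin n // mk (θf i) = mk a} := by rw [hPeq]
      _ = (Ec (mk a)).card := by
          rw [Nat.card_eq_fintype_card, Fintype.card_subtype]
      _ = (Vc (mk a)).card := hcard.symm
      _ = Nat.card {b : Option (Fin n) // mk b = mk a} := by
          rw [Nat.card_eq_fintype_card, Fintype.card_subtype]
      _ = Nat.card {b : Option (Fin n) // R a b} := by rw [hQeq]
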